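/- arXiv:1805.04151 — 6 statements merged into one kernel-verified Lean document; each statement's English description precedes it below -/
import Mathlib

section
/- Let $K_m$ be the complete graph on $m$ vertices and $G_1,\dots,G_t$ be bipartite graphs on the same vertex set whose edge sets cover $E(K_m)$. If $\tau(G_i)$ denotes the fraction of non-isolated vertices of $G_i$, then $\log_2 m \le \sum_{i=1}^t \tau(G_i)$. -/
/-- Hansel's lemma: if bipartite graphs `G 1, ..., G t` cover the complete graph on
`m` vertices, then `log₂ m ≤ ∑ τ(G i)`, where `τ(G i)` is the fraction of
non-isolated vertices of `G i`. -/
theorem stmt0 (m t : ℕ) (hm : 1 ≤ m) (G : Fin t → SimpleGraph (Fin m))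
    (hbip : ∀ i, ∃ A B : Finset (Fin m), Disjoint A B ∧
      ∀ u v, (G i).Adj u v → (u ∈ A ∧ v ∈ B) ∨ (u ∈ B ∧ v ∈ A))
    (hcover : ∀ u v : Fin m, u ≠ v → ∃ i, (G i).Adj u v) :
    Real.logb 2 m ≤ ∑ i : Fin t,
      (Set.ncard {v : Fin m | ∃ u, (G i).Adj v u} : ℝ) / m := by
  classical
  choose A B hAB hadj using hbip
  have hnAB : ∀ i (v : Fin m), v ∈ A i → v ∉ B i := fun i v hA hB =>
    Finset.disjoint_left.1 (hAB i) hA hB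
  set d : Fin m → ℕ := fun v => (Finset.univ.filter (fun i => ∃ u, (G i).Adj v u)).card with hd
  have hside : ∀ i v, (∃ u, (G i).Adj v u) → (v ∈ A i ∨ v ∈ B i) := by
    intro i v ⟨u, hu⟩
    rcases hadj i v u hu with ⟨h1, _⟩ | ⟨h1, _⟩
    · exact Or.inl h1
    · exact Or.inr h1
  set surv : (Fin t → Bool) → Fin m → Prop :=
    fun σ v => ∀ i, (∃ u, (G i).Adj v u) → v ∈ (if σ i then A i else B i) with hsurv
  have hone : ∀ σ, (Finset.univ.filter (fun v => surv σ v)).card ≤ 1 := by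
    intro σ
    refine Finset.card_le_one.2 ?_
    intro u hu v hv
    simp only [Finset.mem_filter] at hu hv
    by_contra hne
    obtain ⟨i, hi⟩ := hcover u v hne
    have hu' := hu.2 i ⟨v, hi⟩
    have hv' := hv.2 i ⟨u, hi.symm⟩
    rcases hadj i u v hi with ⟨h1, h2⟩ | ⟨h1, h2⟩ <;> cases hσ : σ i <;>
      simp only [hσ, Bool.false_eq_true, ite_true, ite_false, if_true, if_false] at hu' hv' <;>
      first
      | exact hnAB i u h1 hu'
      | exact hnAB i u hu' h1
      | exact hnAB i v h2 hv'
      | exact hnAB i v hv' h2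
  have hcount : ∀ v, (Finset.univ.filter (fun σ => surv σ v)).card = 2 ^ (t - d v) := by
    intro v
    have hset : Finset.univ.filter (fun σ => surv σ v)
        = Fintype.piFinset (fun i => if (∃ u, (G i).Adj v u) then {decide (v ∈ A i)} else Finset.univ) := by
      ext σ
      simp only [Finset.mem_filter, Finset.mem_univ, true_and, Fintype.mem_piFinset]
      constructor
      · intro h i
        by_cases hiv : ∃ u, (G i).Adj v u
        · simp only [hiv, if_true, Finset.mem_singleton]
          have hv' := h i hiv
          cases hσ : σ i <;> simp only [hσ, if_true, if_false] at hv'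
          · have hnA : v ∉ A i := fun hvA => hnAB i v hvA hv'
            simp [hnA]
          · simp [hv']
        · simp [hiv]
      · intro h i hiv
        have hσi := h i
        simp only [hiv, if_true, Finset.mem_singleton] at hσi
        rcases hside i v hiv with hvA | hvB
        · rw [hσi]; simp [hvA]
        · have hnA : v ∉ A i := fun hvA => hnAB i v hvA hvB
          have hσf : σ i = false := by rw [hσi]; simp [hnA]
          simp [hσf, hvB]
    rw [hset, Fintype.card_piFinset]
    have hcards : ∀ i : Fin t,
        (if (∃ u, (G i).Adj v u) then ({decide (v ∈ A i)} : Finset Bool) else Finset.univ).card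
        = if (∃ u, (G i).Adj v u) then 1 else 2 := by
      intro i; by_cases hiv : ∃ u, (G i).Adj v u <;> simp [hiv]
    rw [Finset.prod_congr rfl (fun i _ => hcards i), Finset.prod_ite, Finset.prod_const,
      Finset.prod_const]
    simp only [one_pow, one_mul]
    congr 1
    rw [Finset.filter_not, Finset.card_sdiff_of_subset (Finset.filter_subset _ _), Finset.card_univ,
      Fintype.card_fin]
  have hkey : ∑ v : Fin m, 2 ^ (t - d v) ≤ 2 ^ t := by
    calc ∑ v : Fin m, 2 ^ (t - d v)
        = ∑ v : Fin m, (Finset.univ.filter (fun σ => surv σ v)).card := by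
          refine Finset.sum_congr rfl fun v _ => (hcount v).symm
      _ = ∑ v : Fin m, ∑ σ : Fin t → Bool, if surv σ v then 1 else 0 :=
          Finset.sum_congr rfl fun v _ => Finset.card_filter _ _
      _ = ∑ σ : Fin t → Bool, ∑ v : Fin m, if surv σ v then 1 else 0 := Finset.sum_comm
      _ = ∑ σ : Fin t → Bool, (Finset.univ.filter (fun v => surv σ v)).card :=
          Finset.sum_congr rfl fun σ _ => (Finset.card_filter _ _).symm
      _ ≤ ∑ σ : Fin t → Bool, 1 := Finset.sum_le_sum fun σ _ => hone σ
      _ = 2 ^ t := by simp [Finset.card_univ]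
  have hdle : ∀ v, d v ≤ t := fun v => le_trans (Finset.card_filter_le _ _) (by simp)
  -- real version: ∑ v, (2 ^ d v)⁻¹ ≤ 1
  have hreal : ∑ v : Fin m, ((2:ℝ) ^ d v)⁻¹ ≤ 1 := by
    have h2 : (0:ℝ) < 2 ^ t := by positivity
    have hcast : ((∑ v : Fin m, 2 ^ (t - d v) : ℕ) : ℝ) ≤ ((2:ℕ) ^ t : ℕ) := Nat.cast_le.2 hkey
    push_cast at hcast
    calc ∑ v : Fin m, ((2:ℝ) ^ d v)⁻¹
        = (∑ v : Fin m, (2:ℝ) ^ (t - d v)) / 2 ^ t := by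
          rw [Finset.sum_div]
          refine Finset.sum_congr rfl fun v _ => ?_
          rw [pow_sub₀ (2:ℝ) two_ne_zero (hdle v)]
          field_simp
      _ ≤ 1 := (div_le_one h2).2 hcast
  -- Jensen
  have hm0 : (0:ℝ) < m := by exact_mod_cast hm
  have hjen := convexOn_exp.map_sum_le (t := (Finset.univ : Finset (Fin m)))
    (w := fun _ => 1 / (m:ℝ)) (p := fun v => -((d v : ℝ) * Real.log 2))
    (fun _ _ => by positivity)
    (by rw [Finset.sum_const, Finset.card_univ, Fintype.card_fin, nsmul_eq_mul]; field_simp)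
    (fun _ _ => Set.mem_univ _)
  have hexp : ∀ v : Fin m, Real.exp (-((d v : ℝ) * Real.log 2)) = ((2:ℝ) ^ d v)⁻¹ := by
    intro v
    rw [Real.exp_neg, Real.exp_nat_mul, Real.exp_log two_pos]
  have hle : Real.exp (∑ v : Fin m, (1/(m:ℝ)) • (-((d v : ℝ) * Real.log 2))) ≤ 1 / m := by
    refine hjen.trans ?_
    calc ∑ v : Fin m, (1/(m:ℝ)) • Real.exp (-((d v : ℝ) * Real.log 2))
        = (1/(m:ℝ)) * ∑ v : Fin m, ((2:ℝ) ^ d v)⁻¹ := by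
          simp only [smul_eq_mul]
          rw [← Finset.mul_sum]
          congr 1
          exact Finset.sum_congr rfl fun v _ => by rw [hexp v]
      _ ≤ (1/(m:ℝ)) * 1 := by
          refine mul_le_mul_of_nonneg_left hreal (by positivity)
      _ = 1 / m := by ring
  have hlog := Real.log_le_log (Real.exp_pos _) hle
  rw [Real.log_exp] at hlog
  have hlog1m : Real.log (1 / (m:ℝ)) = -Real.log m := by
    rw [one_div, Real.log_inv]
  rw [hlog1m] at hlog
  have hsum : ∑ v : Fin m, (1/(m:ℝ)) • (-((d v : ℝ) * Real.log 2))
      = -((∑ v : Fin m, (d v : ℝ)) / m * Real.log 2) := by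
    rw [← Finset.smul_sum]
    simp only [smul_eq_mul, Finset.sum_neg_distrib, ← Finset.sum_mul]
    ring
  rw [hsum, neg_le_neg_iff] at hlog
  have hlog2 : (0:ℝ) < Real.log 2 := Real.log_pos (by norm_num)
  have hmain : Real.logb 2 m ≤ (∑ v : Fin m, (d v : ℝ)) / m := by
    rw [Real.logb, div_le_iff₀ hlog2]
    exact hlog
  refine hmain.trans_eq ?_
  -- rewrite RHS
  have hncard : ∀ i, ({v : Fin m | ∃ u, (G i).Adj v u}.ncard : ℝ)
      = ((Finset.univ.filter (fun v => ∃ u, (G i).Adj v u)).card : ℝ) := by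
    intro i
    congr 1
    have : {v : Fin m | ∃ u, (G i).Adj v u}
        = ↑(Finset.univ.filter (fun v => ∃ u, (G i).Adj v u)) := by ext; simp
    rw [this, Set.ncard_coe_finset]
  have hdc : ∑ v : Fin m, (d v : ℝ)
      = ∑ i : Fin t, ((Finset.univ.filter (fun v => ∃ u, (G i).Adj v u)).card : ℝ) := by
    have : ∑ v : Fin m, d v
        = ∑ i : Fin t, (Finset.univ.filter (fun v => ∃ u, (G i).Adj v u)).card := by
      simp only [hd, Finset.card_filter]
      exact Finset.sum_comm
    exact_mod_cast congrArg (Nat.cast : ℕ → ℝ) this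
  rw [hdc, Finset.sum_div]
  exact Finset.sum_congr rfl fun i _ => by rw [hncard i]
end

section
/- For every integer $k \ge 4$ and every probability vector $f \in \mathbb{R}^k$, $\phi_k(f,f) \le k!/k^{k-1}$, where $\phi_k(f,f) = (k-1)! S_{k-1}^k(f)$. -/
open Finset

private lemma amgm {ι : Type*} (s : Finset ι) (f : ι → ℝ) (hf : ∀ i ∈ s, 0 ≤ f i) :
    (s.card : ℝ) ^ s.card * ∏ i ∈ s, f i ≤ (∑ i ∈ s, f i) ^ s.card := by
  rcases Finset.eq_empty_or_nonempty s with rfl | hs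
  · simp
  · have hn : 0 < s.card := Finset.card_pos.mpr hs
    have hn' : (0:ℝ) < (s.card : ℝ) := by exact_mod_cast hn
    have h := Real.geom_mean_le_arith_mean_weighted s (fun _ => ((s.card : ℝ))⁻¹) f
      (fun i _ => by positivity)
      (by simp [Finset.sum_const]; field_simp) hf
    have hprod : ∏ i ∈ s, f i ^ ((s.card:ℝ))⁻¹ = (∏ i ∈ s, f i) ^ ((s.card:ℝ))⁻¹ := by
      rw [← Real.finset_prod_rpow s f hf]
    rw [hprod] at h
    have hP : (0:ℝ) ≤ ∏ i ∈ s, f i := Finset.prod_nonneg hf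
    have h2 : ∏ i ∈ s, f i ≤ ((∑ i ∈ s, f i) / s.card) ^ (s.card : ℕ) := by
      have := Real.rpow_le_rpow (Real.rpow_nonneg hP _) h (by positivity : (0:ℝ) ≤ (s.card:ℝ))
      rw [← Real.rpow_natCast ((∑ i ∈ s, f i) / s.card) s.card]
      calc ∏ i ∈ s, f i = ((∏ i ∈ s, f i) ^ ((s.card:ℝ))⁻¹) ^ (s.card:ℝ) := by
            rw [← Real.rpow_mul hP, inv_mul_cancel₀ (ne_of_gt hn'), Real.rpow_one]
        _ ≤ (∑ i ∈ s, ((s.card:ℝ))⁻¹ * f i) ^ (s.card:ℝ) := this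
        _ = ((∑ i ∈ s, f i) / s.card) ^ (s.card:ℝ) := by
            rw [← Finset.mul_sum]; ring_nf
    calc (s.card : ℝ) ^ s.card * ∏ i ∈ s, f i
        ≤ (s.card : ℝ) ^ s.card * ((∑ i ∈ s, f i) / s.card) ^ s.card := by
          exact mul_le_mul_of_nonneg_left h2 (by positivity)
      _ = (∑ i ∈ s, f i) ^ s.card := by
          rw [div_pow, mul_div_cancel₀]
          positivity

private lemma key_ineq (m : ℕ) (S T : ℝ) (hS : 0 ≤ S) (hT : 0 ≤ T) :
    ((m:ℝ)+2) ^ m * (S ^ (m+1) + ((m:ℝ)+1)^2 * T * S ^ m)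
      ≤ ((m:ℝ)+1) ^ (m+1) * (S+T) ^ (m+1) := by
  set N : ℝ := (m:ℝ)+1 with hN
  have hNpos : 0 < N := by positivity
  set x : Fin (m+1) → ℝ := Fin.cons (N * (S + N^2 * T)) (fun _ => N * (N+1) * S) with hx
  have hxn : ∀ i ∈ (univ : Finset (Fin (m+1))), 0 ≤ x i := by
    intro i _
    refine Fin.cases ?_ (fun j => ?_) i <;> simp only [hx, Fin.cons_zero, Fin.cons_succ] <;> positivity
  have h := amgm univ x hxn
  have hcard : (univ : Finset (Fin (m+1))).card = m + 1 := by simp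
  rw [hcard] at h
  have hprod : ∏ i, x i = (N * (S + N^2 * T)) * (N * (N+1) * S) ^ m := by
    rw [hx, Fin.prod_cons]
    simp [Finset.prod_const]
  have hsum : ∑ i, x i = N^3 * (S + T) := by
    rw [hx, Fin.sum_cons]
    simp only [Finset.sum_const, Finset.card_univ, Fintype.card_fin, nsmul_eq_mul]
    rw [hN]; ring
  rw [hprod, hsum] at h
  push_cast at h ⊢
  -- h : (N)^(m+1) * ((N(S+N²T)) * (N(N+1)S)^m) ≤ (N³(S+T))^(m+1)
  have hexpand : ((m:ℝ)+1) ^ (m+1) * ((N * (S + N^2 * T)) * (N * (N+1) * S) ^ m)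
      = N^(2*(m+1)) * ((N+1) ^ m * (S ^ (m+1) + N^2 * T * S ^ m)) := by
    rw [mul_pow, mul_pow, ← hN]
    ring
  have hrhs : (N^3 * (S+T)) ^ (m+1) = N^(2*(m+1)) * (N^(m+1) * (S+T)^(m+1)) := by
    rw [mul_pow, ← pow_mul]
    ring
  rw [hexpand, hrhs] at h
  have := le_of_mul_le_mul_left h (by positivity : (0:ℝ) < N^(2*(m+1)))
  have hN1 : N + 1 = (m:ℝ) + 2 := by rw [hN]; ring
  rw [hN1] at this
  calc ((m:ℝ)+2) ^ m * (S ^ (m+1) + ((m:ℝ)+1)^2 * T * S ^ m)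
      = ((m:ℝ)+2) ^ m * (S ^ (m+1) + N^2 * T * S ^ m) := by rw [hN]
    _ ≤ N^(m+1) * (S+T)^(m+1) := this
    _ = ((m:ℝ)+1) ^ (m+1) * (S+T) ^ (m+1) := by rw [hN]

private lemma main_lemma {ι : Type*} [DecidableEq ι] :
    ∀ (n : ℕ) (s : Finset ι) (f : ι → ℝ), s.card = n → (∀ i ∈ s, 0 ≤ f i) →
    (n:ℝ) ^ (n-2) * ∑ A ∈ s.powersetCard (n-1), ∏ a ∈ A, f a
      ≤ (∑ a ∈ s, f a) ^ (n-1) := by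
  intro n
  induction n with
  | zero =>
    intro s f hcard hf
    rw [Finset.card_eq_zero] at hcard; subst hcard; simp
  | succ m ih =>
    intro s f hcard hf
    rcases Nat.eq_zero_or_pos m with rfl | hm
    · simp
    -- m ≥ 1
    obtain ⟨x, hxs⟩ : s.Nonempty := Finset.card_pos.mp (by omega)
    set t := s.erase x with ht
    have hxt : x ∉ t := Finset.notMem_erase x s
    have hst : s = insert x t := (Finset.insert_erase hxs).symm
    have hct : t.card = m := by
      rw [ht, Finset.card_erase_of_mem hxs, hcard]; omega
    have hft : ∀ i ∈ t, 0 ≤ f i := fun i hi => hf i (Finset.erase_subset _ _ hi)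
    -- split the sum
    have hsucc : (m - 1).succ = m := by omega
    have hsplit : s.powersetCard m
        = t.powersetCard m ∪ (t.powersetCard (m-1)).image (insert x) := by
      have h := Finset.powersetCard_succ_insert hxt (m-1)
      rw [hsucc] at h
      rw [hst, h]
    have hdisj : Disjoint (t.powersetCard m) ((t.powersetCard (m-1)).image (insert x)) := by
      rw [Finset.disjoint_left]
      intro A hA hA'
      obtain ⟨B, hB, rfl⟩ := Finset.mem_image.mp hA'
      have hsub := (Finset.mem_powersetCard.mp hA).1
      exact hxt (hsub (Finset.mem_insert_self x B))
    have himg : ∑ A ∈ (t.powersetCard (m-1)).image (insert x), ∏ a ∈ A, f a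
        = f x * ∑ B ∈ t.powersetCard (m-1), ∏ a ∈ B, f a := by
      rw [Finset.sum_image, Finset.mul_sum]
      · refine Finset.sum_congr rfl fun B hB => ?_
        have hxB : x ∉ B := fun h => hxt ((Finset.mem_powersetCard.mp hB).1 h)
        rw [Finset.prod_insert hxB]
      · intro B hB B' hB' hBB'
        have hxB : x ∉ B := fun h => hxt ((Finset.mem_powersetCard.mp hB).1 h)
        have hxB' : x ∉ B' := fun h => hxt ((Finset.mem_powersetCard.mp hB').1 h)
        rw [← Finset.erase_insert hxB, ← Finset.erase_insert hxB', hBB']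
    have hself : t.powersetCard m = {t} := by rw [← hct, Finset.powersetCard_self]
    have he : ∑ A ∈ s.powersetCard m, ∏ a ∈ A, f a
        = ∏ a ∈ t, f a + f x * ∑ B ∈ t.powersetCard (m-1), ∏ a ∈ B, f a := by
      rw [hsplit, Finset.sum_union hdisj, himg, hself, Finset.sum_singleton]
    set S := ∑ a ∈ t, f a with hSdef
    set T := f x with hTdef
    set E := ∑ B ∈ t.powersetCard (m-1), ∏ a ∈ B, f a with hEdef
    set P := ∏ a ∈ t, f a with hPdef
    have hS : 0 ≤ S := Finset.sum_nonneg hft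
    have hT : 0 ≤ T := hf x hxs
    have hE : 0 ≤ E := Finset.sum_nonneg fun B hB =>
      Finset.prod_nonneg fun a ha => hft a ((Finset.mem_powersetCard.mp hB).1 ha)
    have hP : 0 ≤ P := Finset.prod_nonneg hft
    have hIH : (m:ℝ) ^ (m-2) * E ≤ S ^ (m-1) := ih t f hct hft
    have hAM : (m:ℝ) ^ m * P ≤ S ^ m := by
      have := amgm t f hft; rwa [hct] at this
    have hsum : ∑ a ∈ s, f a = T + S := by rw [hst, Finset.sum_insert hxt]
    -- reduce goal
    have e1 : m + 1 - 2 = m - 1 := by omega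
    have e2 : m + 1 - 1 = m := by omega
    rw [Nat.add_sub_cancel] at *
    rw [e1, he, hsum]
    push_cast
    -- goal : ((m:ℝ)+1) ^ (m-1) * (P + T * E) ≤ (T + S) ^ m
    have hpow : (m:ℝ) ^ m = (m:ℝ)^2 * (m:ℝ)^(m-2) := by
      rcases Nat.lt_or_ge m 2 with h2 | h2
      · have hm1 : m = 1 := by omega
        subst hm1; norm_num
      · rw [← pow_add]; congr 1; omega
    have h1 : (m:ℝ)^m * (P + T * E) ≤ S^m + (m:ℝ)^2 * T * S^(m-1) := by
      have hB2 := mul_le_mul_of_nonneg_left hIH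
        (mul_nonneg (sq_nonneg (m:ℝ)) hT)
      calc (m:ℝ)^m * (P + T * E)
          = (m:ℝ)^m * P + ((m:ℝ)^2 * T) * ((m:ℝ)^(m-2) * E) := by rw [hpow]; ring
        _ ≤ S^m + ((m:ℝ)^2 * T) * S^(m-1) := add_le_add hAM hB2
        _ = S^m + (m:ℝ)^2 * T * S^(m-1) := by ring
    have hk := key_ineq (m-1) S T hS hT
    have hc1 : ((m-1:ℕ):ℝ) = (m:ℝ) - 1 := by
      rw [Nat.cast_sub hm]; norm_num
    have hs2 : m - 1 + 1 = m := by omega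
    rw [hs2, hc1] at hk
    have hk' : ((m:ℝ)+1) ^ (m-1) * (S^m + (m:ℝ)^2 * T * S^(m-1)) ≤ (m:ℝ)^m * (S+T)^m := by
      have ha : (m:ℝ) - 1 + 2 = (m:ℝ) + 1 := by ring
      have hb : (m:ℝ) - 1 + 1 = (m:ℝ) := by ring
      rwa [ha, hb] at hk
    have hmpos : (0:ℝ) < (m:ℝ)^m := by positivity
    have hchain : (m:ℝ)^m * (((m:ℝ)+1) ^ (m-1) * (P + T * E)) ≤ (m:ℝ)^m * (T+S)^m := by
      calc (m:ℝ)^m * (((m:ℝ)+1) ^ (m-1) * (P + T * E))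
          = ((m:ℝ)+1) ^ (m-1) * ((m:ℝ)^m * (P + T * E)) := by ring
        _ ≤ ((m:ℝ)+1) ^ (m-1) * (S^m + (m:ℝ)^2 * T * S^(m-1)) :=
            mul_le_mul_of_nonneg_left h1 (by positivity)
        _ ≤ (m:ℝ)^m * (S+T)^m := hk'
        _ = (m:ℝ)^m * (T+S)^m := by ring
    exact le_of_mul_le_mul_left hchain hmpos

/-- Fredman–Komlós bound on the diagonal: for every probability vector `f ∈ ℝ^k`,
`φ_k(f,f) = (k-1)! · S_{k-1}^k(f) ≤ k! / k^{k-1}`. -/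
theorem stmt4 (k : ℕ) (hk : 4 ≤ k) (f : Fin k → ℝ)
    (hf0 : ∀ a, 0 ≤ f a) (hf1 : ∑ a, f a = 1) :
    (Nat.factorial (k - 1) : ℝ) *
        ∑ A ∈ Finset.univ.powersetCard (k - 1), ∏ a ∈ A, f a
      ≤ (Nat.factorial k : ℝ) / (k : ℝ) ^ (k - 1) := by
  have hcard : (Finset.univ : Finset (Fin k)).card = k := by simp
  have hmain := main_lemma k Finset.univ f hcard (fun i _ => hf0 i)
  rw [hf1, one_pow] at hmain
  set Ssum := ∑ A ∈ Finset.univ.powersetCard (k - 1), ∏ a ∈ A, f a with hSsumdef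
  have hSsum0 : 0 ≤ Ssum := Finset.sum_nonneg fun A hA =>
    Finset.prod_nonneg fun a _ => hf0 a
  have hkpos : (0:ℝ) < (k:ℝ) := by positivity
  have h1 : (Nat.factorial k : ℝ) = (k:ℝ) * (Nat.factorial (k-1) : ℝ) := by
    rw [← Nat.mul_factorial_pred (by omega : k ≠ 0)]
    push_cast
    ring
  have h2 : (k:ℝ) ^ (k-1) = (k:ℝ) * (k:ℝ) ^ (k-2) := by
    rw [← pow_succ']
    congr 1
    omega
  rw [h1, h2, mul_div_mul_left _ _ (ne_of_gt hkpos), le_div_iff₀ (by positivity)]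
  calc (Nat.factorial (k-1) : ℝ) * Ssum * (k:ℝ)^(k-2)
      = (Nat.factorial (k-1) : ℝ) * ((k:ℝ)^(k-2) * Ssum) := by ring
    _ ≤ (Nat.factorial (k-1) : ℝ) * 1 :=
        mul_le_mul_of_nonneg_left hmain (by positivity)
    _ = (Nat.factorial (k-1) : ℝ) := mul_one _
end

section
/- For integer $k \ge 4$ and $0 \le \gamma < 1/k$, it holds that $\xi_k(\gamma) < \alpha_k$, where $\xi_k(\gamma) = \frac{(k-2)!\,(1-\gamma)^{k-2}\,\big((k^2-2k)\gamma + 1\big)}{(k-1)^{k-2}}$ and $\alpha_k = k!/k^{k-1}$; moreover $\xi_k(1/k) = \alpha_k$. -/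
lemma core_sum (n : ℕ) (hn : 1 ≤ n) (c t : ℝ) (hc : 0 < c) (hct : c < t) :
    t ^ (n + 1) - c ^ (n + 1) < ((n : ℝ) + 1) * t ^ n * (t - c) := by
  have ht : 0 < t := hc.trans hct
  have hgeom := geom_sum₂_mul t c (n + 1)
  simp only [Nat.add_sub_cancel] at hgeom
  have hsum : (∑ i ∈ Finset.range (n + 1), t ^ i * c ^ (n - i)) < ((n : ℝ) + 1) * t ^ n := by
    have hconst : ((n : ℝ) + 1) * t ^ n = ∑ _i ∈ Finset.range (n + 1), t ^ n := by
      rw [Finset.sum_const, Finset.card_range]; push_cast; ring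
    rw [hconst]
    apply Finset.sum_lt_sum
    · intro i hi
      have hi' : i ≤ n := by
        have := Finset.mem_range.1 hi; omega
      calc t ^ i * c ^ (n - i) ≤ t ^ i * t ^ (n - i) := by
            exact mul_le_mul_of_nonneg_left (pow_le_pow_left₀ hc.le hct.le _)
              (pow_nonneg ht.le i)
        _ = t ^ n := by rw [← pow_add]; congr 1; omega
    · refine ⟨0, Finset.mem_range.2 (Nat.succ_pos n), ?_⟩
      simpa using pow_lt_pow_left₀ hct hc.le (by omega)
  calc t ^ (n + 1) - c ^ (n + 1)
      = (∑ i ∈ Finset.range (n + 1), t ^ i * c ^ (n - i)) * (t - c) := hgeom.symm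
    _ < ((n : ℝ) + 1) * t ^ n * (t - c) :=
        mul_lt_mul_of_pos_right hsum (by linarith)

/-- For `0 ≤ γ < 1/k`, `ξ_k(γ) < α_k = k!/k^{k-1}`, where
`ξ_k(γ) = (k-2)! (1-γ)^{k-2} ((k²-2k)γ+1)/(k-1)^{k-2}`; moreover `ξ_k(1/k) = α_k`. -/
theorem stmt7 (k : ℕ) (hk : 4 ≤ k) (γ : ℝ) (hγ0 : 0 ≤ γ) (hγ1 : γ < 1 / (k : ℝ)) :
    (Nat.factorial (k - 2) : ℝ) * (1 - γ) ^ (k - 2) * (((k : ℝ) ^ 2 - 2 * k) * γ + 1) /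
        ((k : ℝ) - 1) ^ (k - 2)
      < (Nat.factorial k : ℝ) / (k : ℝ) ^ (k - 1) ∧
    (Nat.factorial (k - 2) : ℝ) * (1 - 1 / (k : ℝ)) ^ (k - 2) *
          (((k : ℝ) ^ 2 - 2 * k) * (1 / (k : ℝ)) + 1) / ((k : ℝ) - 1) ^ (k - 2)
      = (Nat.factorial k : ℝ) / (k : ℝ) ^ (k - 1) := by
  obtain ⟨m, rfl⟩ : ∃ m, k = m + 2 := ⟨k - 2, by omega⟩
  have hm : 2 ≤ m := by omega
  have hM : (2 : ℝ) ≤ (m : ℝ) := by exact_mod_cast hm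
  have hK : (0 : ℝ) < (m : ℝ) + 2 := by linarith
  simp only [show m + 2 - 2 = m from rfl, show m + 2 - 1 = m + 1 from rfl]
  push_cast
  rw [show ((m : ℝ) + 2 - 1) = (m : ℝ) + 1 from by ring]
  set c : ℝ := ((m : ℝ) + 1) / ((m : ℝ) + 2) with hcdef
  have hc0 : 0 < c := by positivity
  have hc' : ((m : ℝ) + 2) * c = (m : ℝ) + 1 := by
    rw [hcdef, mul_div_cancel₀ _ (ne_of_gt hK)]
  have hfact : (0 : ℝ) < (Nat.factorial m : ℝ) := by positivity
  have hfs : (Nat.factorial (m + 2) : ℝ)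
      = ((m : ℝ) + 2) * ((m : ℝ) + 1) * (Nat.factorial m : ℝ) := by
    rw [Nat.factorial_succ, Nat.factorial_succ]; push_cast; ring
  constructor
  · -- inequality part
    have hγ1' : γ < 1 / ((m : ℝ) + 2) := by
      convert hγ1 using 2 <;> push_cast <;> ring
    have hc1 : c = 1 - 1 / ((m : ℝ) + 2) := by
      rw [hcdef, eq_sub_iff_add_eq, ← add_div,
        show (m : ℝ) + 1 + 1 = (m : ℝ) + 2 from by ring, div_self (ne_of_gt hK)]
    set t : ℝ := 1 - γ with htdef
    have hct : c < t := by
      show c < 1 - γ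
      rw [hc1]; linarith
    have hcore := core_sum m (by omega) c t hc0 hct
    have hid : ((m : ℝ) + 1) * c ^ m - t ^ m * (((m : ℝ) + 1) ^ 2 - ((m : ℝ) + 2) * m * t)
        = ((m : ℝ) + 2) * (((m : ℝ) + 1) * t ^ m * (t - c) - (t ^ m * t - c ^ m * c)) := by
      linear_combination (((m : ℝ) + 1) * t ^ m - c ^ m) * hc'
    have h1 : t ^ m * (((m : ℝ) + 1) ^ 2 - ((m : ℝ) + 2) * m * t) < ((m : ℝ) + 1) * c ^ m := by
      rw [pow_succ, pow_succ] at hcore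
      nlinarith [mul_pos hK (by linarith :
        (0 : ℝ) < ((m : ℝ) + 1) * t ^ m * (t - c) - (t ^ m * t - c ^ m * c))]
    have hX : (((m : ℝ) + 2) ^ 2 - 2 * ((m : ℝ) + 2)) * γ + 1
        = ((m : ℝ) + 1) ^ 2 - ((m : ℝ) + 2) * m * t := by
      rw [htdef]; ring
    have hcm : c ^ m * ((m : ℝ) + 2) ^ m = ((m : ℝ) + 1) ^ m := by
      rw [hcdef, div_pow, div_mul_cancel₀]
      positivity
    have h2 : t ^ m * (((m : ℝ) + 1) ^ 2 - ((m : ℝ) + 2) * m * t) * ((m : ℝ) + 2) ^ m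
        < ((m : ℝ) + 1) * ((m : ℝ) + 1) ^ m := by
      calc t ^ m * (((m : ℝ) + 1) ^ 2 - ((m : ℝ) + 2) * m * t) * ((m : ℝ) + 2) ^ m
          < ((m : ℝ) + 1) * c ^ m * ((m : ℝ) + 2) ^ m :=
            mul_lt_mul_of_pos_right h1 (by positivity)
        _ = ((m : ℝ) + 1) * ((m : ℝ) + 1) ^ m := by rw [mul_assoc, hcm]
    rw [div_lt_div_iff₀ (by positivity) (by positivity), hfs, hX]
    calc (Nat.factorial m : ℝ) * t ^ m * (((m : ℝ) + 1) ^ 2 - ((m : ℝ) + 2) * m * t) *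
          ((m : ℝ) + 2) ^ (m + 1)
        = ((Nat.factorial m : ℝ) * ((m : ℝ) + 2)) *
            (t ^ m * (((m : ℝ) + 1) ^ 2 - ((m : ℝ) + 2) * m * t) * ((m : ℝ) + 2) ^ m) := by
          ring
      _ < ((Nat.factorial m : ℝ) * ((m : ℝ) + 2)) * (((m : ℝ) + 1) * ((m : ℝ) + 1) ^ m) :=
          mul_lt_mul_of_pos_left h2 (by positivity)
      _ = ((m : ℝ) + 2) * ((m : ℝ) + 1) * (Nat.factorial m : ℝ) * ((m : ℝ) + 1) ^ m := by
          ring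
  · -- equality part
    have h1 : (1 : ℝ) - 1 / ((m : ℝ) + 2) = ((m : ℝ) + 1) / ((m : ℝ) + 2) := by
      rw [eq_div_iff (ne_of_gt hK)]
      field_simp
      ring
    rw [h1, hfs, div_pow]
    have hMp1 : (0 : ℝ) < ((m : ℝ) + 1) ^ m := by positivity
    have hMp2 : (0 : ℝ) < ((m : ℝ) + 2) ^ m := by positivity
    field_simp
    ring
end

section
/- Let $k \ge 4$, $C \subseteq [k]^n$ with $|C| = 2^{nR}$, and let $\ell = \lfloor (nR - \log_2 n)/\log_2\frac{k}{k-3} \rfloor$ with $\ell \ge 0$. Fix $T \subseteq [n]$ with $|T| = \ell$, and define $C_\omega$ as the set of codewords of $C$ whose symbol at each coordinate $t \in T$ lies in the $(k-3)$-element set $\omega_t$. Then there exists $\omega \in \Omega = \binom{[k]}{k-3}^T$ such that $|C_\omega| \ge n$. -/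
open Finset

/-- Number of `(m+1)`-subsets of `s` containing a fixed element `a ∈ s`. -/
lemma aux_card_filter_mem {α : Type*} [DecidableEq α] (s : Finset α) (a : α) (ha : a ∈ s)
    (m : ℕ) :
    ((s.powersetCard (m + 1)).filter (fun t => a ∈ t)).card = (s.card - 1).choose m := by
  have : ((s.powersetCard (m + 1)).filter (fun t => a ∈ t)).card
      = ((s.erase a).powersetCard m).card := by
    refine Finset.card_bij' (fun t _ => t.erase a) (fun t _ => insert a t) ?hi ?hj ?li ?ri
    case hi =>
      intro t ht
      simp only [mem_filter, Finset.mem_powersetCard] at ht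
      rw [Finset.mem_powersetCard]
      constructor
      · exact Finset.erase_subset_erase a ht.1.1
      · rw [Finset.card_erase_of_mem ht.2, ht.1.2]; omega
    case hj =>
      intro t ht
      rw [Finset.mem_powersetCard] at ht
      have hat : a ∉ t := fun h => (Finset.mem_erase.mp (ht.1 h)).1 rfl
      simp only [mem_filter, Finset.mem_powersetCard]
      refine ⟨⟨Finset.insert_subset ha (ht.1.trans (Finset.erase_subset a s)), ?_⟩,
        Finset.mem_insert_self a t⟩
      rw [Finset.card_insert_of_notMem hat, ht.2]
    case li =>
      intro t ht
      simp only [mem_filter] at ht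
      exact Finset.insert_erase ht.2
    case ri =>
      intro t ht
      rw [Finset.mem_powersetCard] at ht
      have hat : a ∉ t := fun h => (Finset.mem_erase.mp (ht.1 h)).1 rfl
      exact Finset.erase_insert hat
  rw [this, Finset.card_powersetCard, Finset.card_erase_of_mem ha]

lemma aux_choose_identity (k : ℕ) (hk : 4 ≤ k) :
    ((k - 1).choose (k - 4)) * k = k.choose (k - 3) * (k - 3) := by
  have hk3 : 3 ≤ k := by omega
  have h1 : k.choose (k - 3) = k.choose 3 := by
    have := Nat.choose_symm hk3 (n := k)
    simpa using this
  have h2 : (k - 1).choose (k - 4) = (k - 1).choose 3 := by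
    have h3k1 : 3 ≤ k - 1 := by omega
    have := Nat.choose_symm h3k1 (n := k - 1)
    have he : k - 1 - 3 = k - 4 := by omega
    rw [he] at this
    exact this
  rw [h1, h2]
  have := Nat.choose_mul_succ_eq (k - 1) 3
  have hk1 : k - 1 + 1 = k := by omega
  rw [hk1] at this
  exact this

/-- If `|C| = 2^{nR}` and `ℓ = ⌊(nR - log₂ n)/log₂(k/(k-3))⌋`, then for any set `T`
of `ℓ` coordinates there exists a tuple `ω` of `(k-3)`-element subsets of `[k]`
indexed by `T` with `|C_ω| ≥ n`. -/
theorem stmt9 (k n ℓ : ℕ) (hk : 4 ≤ k) (hn : 1 ≤ n) (R : ℝ)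
    (C : Finset (Fin n → Fin k))
    (hR : (C.card : ℝ) = 2 ^ ((n : ℝ) * R))
    (hℓ : (ℓ : ℤ) = ⌊((n : ℝ) * R - Real.logb 2 n) / Real.logb 2 ((k : ℝ) / ((k : ℝ) - 3))⌋)
    (T : Finset (Fin n)) (hT : T.card = ℓ) :
    ∃ ω : Fin n → Finset (Fin k),
      (∀ t ∈ T, (ω t).card = k - 3) ∧
      n ≤ (C.filter (fun x => ∀ t ∈ T, x t ∈ ω t)).card := by
  classical
  have hk3 : 3 ≤ k := by omega
  -- The finset of all admissible tuples ω
  set Ω : Finset (Fin n → Finset (Fin k)) :=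
    Fintype.piFinset (fun t => if t ∈ T then Finset.powersetCard (k - 3) Finset.univ
      else {(∅ : Finset (Fin k))}) with hΩdef
  have hkuniv : (Finset.univ : Finset (Fin k)).card = k := by simp
  -- cardinality of Ω
  have hΩcard : Ω.card = (k.choose (k - 3)) ^ ℓ := by
    rw [hΩdef, Fintype.card_piFinset]
    rw [← Finset.prod_filter_mul_prod_filter_not Finset.univ (· ∈ T)]
    have h1 : ∀ t ∈ Finset.univ.filter (· ∈ T),
        (if t ∈ T then Finset.powersetCard (k - 3) (Finset.univ : Finset (Fin k))
          else {(∅ : Finset (Fin k))}).card = k.choose (k - 3) := by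
      intro t ht
      rw [Finset.mem_filter] at ht
      rw [if_pos ht.2, Finset.card_powersetCard, hkuniv]
    have h2 : ∀ t ∈ Finset.univ.filter (¬ · ∈ T),
        (if t ∈ T then Finset.powersetCard (k - 3) (Finset.univ : Finset (Fin k))
          else {(∅ : Finset (Fin k))}).card = 1 := by
      intro t ht
      rw [Finset.mem_filter] at ht
      rw [if_neg ht.2, Finset.card_singleton]
    rw [Finset.prod_congr rfl h1, Finset.prod_congr rfl h2, Finset.prod_const,
      Finset.prod_const, one_pow, mul_one]
    congr 1
    rw [Finset.filter_mem_eq_inter, Finset.univ_inter, hT]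
  -- Ω is nonempty
  have hΩne : Ω.Nonempty := by
    rw [hΩdef, Fintype.piFinset_nonempty]
    intro t
    by_cases ht : t ∈ T
    · rw [if_pos ht]
      exact Finset.powersetCard_nonempty_of_le (by rw [hkuniv]; omega)
    · rw [if_neg ht]
      exact Finset.singleton_nonempty _
  -- for each codeword, the number of ω's capturing it
  have hxcard : ∀ x : Fin n → Fin k,
      (Ω.filter (fun ω => ∀ t ∈ T, x t ∈ ω t)).card = ((k - 1).choose (k - 4)) ^ ℓ := by
    intro x
    have hfe : Ω.filter (fun ω => ∀ t ∈ T, x t ∈ ω t)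
        = Fintype.piFinset (fun t =>
            if t ∈ T then (Finset.powersetCard (k - 3) Finset.univ).filter (fun s => x t ∈ s)
            else {(∅ : Finset (Fin k))}) := by
      ext ω
      simp only [Finset.mem_filter, hΩdef, Fintype.mem_piFinset]
      constructor
      · rintro ⟨h1, h2⟩ t
        by_cases ht : t ∈ T
        · have := h1 t
          rw [if_pos ht] at this ⊢
          exact Finset.mem_filter.mpr ⟨this, h2 t ht⟩
        · have := h1 t
          rwa [if_neg ht] at this ⊢
      · intro h
        constructor
        · intro t
          by_cases ht : t ∈ T
          · have := h t
            rw [if_pos ht] at this ⊢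
            exact (Finset.mem_filter.mp this).1
          · have := h t
            rwa [if_neg ht] at this ⊢
        · intro t ht
          have := h t
          rw [if_pos ht] at this
          exact (Finset.mem_filter.mp this).2
    rw [hfe, Fintype.card_piFinset]
    rw [← Finset.prod_filter_mul_prod_filter_not Finset.univ (· ∈ T)]
    have h1 : ∀ t ∈ Finset.univ.filter (· ∈ T),
        (if t ∈ T then (Finset.powersetCard (k - 3) (Finset.univ : Finset (Fin k))).filter
            (fun s => x t ∈ s) else {(∅ : Finset (Fin k))}).card
          = (k - 1).choose (k - 4) := by
      intro t ht
      rw [Finset.mem_filter] at ht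
      rw [if_pos ht.2]
      have hm : k - 3 = (k - 4) + 1 := by omega
      rw [hm, aux_card_filter_mem Finset.univ (x t) (Finset.mem_univ _) (k - 4), hkuniv]
    have h2 : ∀ t ∈ Finset.univ.filter (¬ · ∈ T),
        (if t ∈ T then (Finset.powersetCard (k - 3) (Finset.univ : Finset (Fin k))).filter
            (fun s => x t ∈ s) else {(∅ : Finset (Fin k))}).card = 1 := by
      intro t ht
      rw [Finset.mem_filter] at ht
      rw [if_neg ht.2, Finset.card_singleton]
    rw [Finset.prod_congr rfl h1, Finset.prod_congr rfl h2, Finset.prod_const,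
      Finset.prod_const, one_pow, mul_one]
    congr 1
    rw [Finset.filter_mem_eq_inter, Finset.univ_inter, hT]
  -- double counting
  have hdouble : ∑ ω ∈ Ω, (C.filter (fun x => ∀ t ∈ T, x t ∈ ω t)).card
      = C.card * ((k - 1).choose (k - 4)) ^ ℓ := by
    have : ∀ ω ∈ Ω, (C.filter (fun x => ∀ t ∈ T, x t ∈ ω t)).card
        = ∑ x ∈ C, if (∀ t ∈ T, x t ∈ ω t) then 1 else 0 := by
      intro ω _
      rw [Finset.card_filter]
    rw [Finset.sum_congr rfl this, Finset.sum_comm]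
    have : ∀ x ∈ C, (∑ ω ∈ Ω, if (∀ t ∈ T, x t ∈ ω t) then 1 else 0)
        = ((k - 1).choose (k - 4)) ^ ℓ := by
      intro x _
      rw [← Finset.card_filter, hxcard x]
    rw [Finset.sum_congr rfl this, Finset.sum_const, smul_eq_mul]
  -- The key real inequality
  have hkey : (n : ℕ) * (k.choose (k - 3)) ^ ℓ ≤ C.card * ((k - 1).choose (k - 4)) ^ ℓ := by
    have hk3pos : (0 : ℝ) < (k : ℝ) - 3 := by
      have : (4 : ℝ) ≤ (k : ℝ) := by exact_mod_cast hk
      linarith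
    have hratio1 : (1 : ℝ) < (k : ℝ) / ((k : ℝ) - 3) := by
      rw [one_lt_div hk3pos]; linarith
    have hL : 0 < Real.logb 2 ((k : ℝ) / ((k : ℝ) - 3)) :=
      Real.logb_pos one_lt_two hratio1
    have hnpos : (0 : ℝ) < (n : ℝ) := by exact_mod_cast hn
    have hℓle : (ℓ : ℝ) ≤ ((n : ℝ) * R - Real.logb 2 n) /
        Real.logb 2 ((k : ℝ) / ((k : ℝ) - 3)) := by
      have := Int.floor_le (((n : ℝ) * R - Real.logb 2 n) /
        Real.logb 2 ((k : ℝ) / ((k : ℝ) - 3)))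
      rw [← hℓ] at this
      exact_mod_cast this
    have hmul : (ℓ : ℝ) * Real.logb 2 ((k : ℝ) / ((k : ℝ) - 3))
        ≤ (n : ℝ) * R - Real.logb 2 n := by
      rw [← le_div_iff₀ hL]; exact hℓle
    have hrpos : (0 : ℝ) < ((k : ℝ) / ((k : ℝ) - 3)) ^ ℓ :=
      pow_pos (by linarith) ℓ
    have hlogb : Real.logb 2 ((n : ℝ) * ((k : ℝ) / ((k : ℝ) - 3)) ^ ℓ) ≤ (n : ℝ) * R := by
      rw [Real.logb_mul (ne_of_gt hnpos) (ne_of_gt hrpos), Real.logb_pow]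
      linarith
    have hmain : (n : ℝ) * ((k : ℝ) / ((k : ℝ) - 3)) ^ ℓ ≤ 2 ^ ((n : ℝ) * R) := by
      rw [← Real.logb_le_iff_le_rpow one_lt_two (by positivity)]
      exact hlogb
    -- choose identity
    have hchoose := aux_choose_identity k hk
    have hchooseR : (k.choose (k - 3) : ℝ)
        = ((k : ℝ) / ((k : ℝ) - 3)) * ((k - 1).choose (k - 4) : ℝ) := by
      have hc := hchoose
      rify [hk3] at hc
      rw [div_mul_eq_mul_div, eq_div_iff (ne_of_gt hk3pos)]
      linarith [hc]
    -- combine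
    have hfinal : ((n : ℕ) * (k.choose (k - 3)) ^ ℓ : ℝ)
        ≤ ((C.card * ((k - 1).choose (k - 4)) ^ ℓ : ℕ) : ℝ) := by
      push_cast
      calc (n : ℝ) * (k.choose (k - 3) : ℝ) ^ ℓ
          = ((n : ℝ) * ((k : ℝ) / ((k : ℝ) - 3)) ^ ℓ) * ((k - 1).choose (k - 4) : ℝ) ^ ℓ := by
            rw [hchooseR, mul_pow]; ring
        _ ≤ 2 ^ ((n : ℝ) * R) * ((k - 1).choose (k - 4) : ℝ) ^ ℓ := by
            apply mul_le_mul_of_nonneg_right hmain (by positivity)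
        _ = (C.card : ℝ) * ((k - 1).choose (k - 4) : ℝ) ^ ℓ := by rw [hR]
    exact_mod_cast hfinal
  -- pigeonhole
  have hsum : ∑ ω ∈ Ω, n ≤ ∑ ω ∈ Ω, (C.filter (fun x => ∀ t ∈ T, x t ∈ ω t)).card := by
    rw [hdouble, Finset.sum_const, smul_eq_mul, hΩcard]
    rw [mul_comm]
    exact hkey
  obtain ⟨ω, hωΩ, hωn⟩ := Finset.exists_le_of_sum_le hΩne hsum
  refine ⟨ω, ?_, hωn⟩
  intro t ht
  have := Fintype.mem_piFinset.mp hωΩ t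
  rw [if_pos ht] at this
  exact (Finset.mem_powersetCard.mp this).2
end

section
/- Let $C \subseteq [k]^n$ be a $k$-hash code with $|C| > k-2$, and let $x_1,\dots,x_{k-2}$ be distinct elements of $C$. With $G_i$ as the bipartite graph on $C\setminus\{x_1,\dots,x_{k-2}\}$ connecting pairs that together with $x_1,\dots,x_{k-2}$ have pairwise distinct $i$-th symbols, and $\tau_i$ the fraction of non-isolated vertices of $G_i$, it holds that $\log_2(|C| - k + 2) \le \sum_{i=1}^n \tau_i$. -/
open Finset

/-- Abstract counting core of Hansel's lemma: if each element `y` of `s` has a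
"profile" `b y` defined on a domain `Dy y ⊆ Fin n`, and any two distinct
elements of `s` disagree somewhere on their common domain, then
`∑ 2^(n - |Dy y|) ≤ 2^n`. -/
lemma hansel_count {α : Type*} [DecidableEq α] {n : ℕ} (s : Finset α)
    (Dy : α → Finset (Fin n)) (b : α → Fin n → Bool)
    (hsep : ∀ y ∈ s, ∀ y' ∈ s, y ≠ y' → ∃ i, i ∈ Dy y ∧ i ∈ Dy y' ∧ b y i ≠ b y' i) :
    ∑ y ∈ s, 2 ^ (n - (Dy y).card) ≤ 2 ^ n := by
  classical
  set A : α → Finset (Fin n → Bool) :=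
    fun y => Fintype.piFinset (fun i => if i ∈ Dy y then ({b y i} : Finset Bool)
      else Finset.univ) with hA
  have hAcard : ∀ y, (A y).card = 2 ^ (n - (Dy y).card) := by
    intro y
    rw [hA]
    rw [Fintype.card_piFinset]
    have h1 : ∀ i : Fin n, (if i ∈ Dy y then ({b y i} : Finset Bool) else Finset.univ).card
        = if i ∈ Dy y then 1 else 2 := by
      intro i; split <;> simp
    rw [Finset.prod_congr rfl (fun i _ => h1 i), Finset.prod_ite, Finset.prod_const,
      Finset.prod_const, one_pow, one_mul]
    congr 1
    have h2 := Finset.card_filter_add_card_filter_not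
      (s := (Finset.univ : Finset (Fin n))) (p := fun i => i ∈ Dy y)
    have h3 : (Finset.univ.filter (fun i => i ∈ Dy y)) = Dy y := by
      rw [Finset.filter_mem_eq_inter, Finset.univ_inter]
    rw [h3, Finset.card_univ, Fintype.card_fin] at h2
    omega
  have hdisj : ∀ y ∈ s, ∀ y' ∈ s, y ≠ y' → Disjoint (A y) (A y') := by
    intro y hy y' hy' hne
    rw [Finset.disjoint_left]
    intro σ h1 h2
    obtain ⟨i, hi, hi', hb⟩ := hsep y hy y' hy' hne
    rw [hA, Fintype.mem_piFinset] at h1 h2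
    have e1 := h1 i
    have e2 := h2 i
    rw [if_pos hi] at e1
    rw [if_pos hi'] at e2
    rw [Finset.mem_singleton] at e1 e2
    exact hb (e1 ▸ e2)
  calc ∑ y ∈ s, 2 ^ (n - (Dy y).card) = ∑ y ∈ s, (A y).card := by
        exact Finset.sum_congr rfl (fun y _ => (hAcard y).symm)
    _ = (s.biUnion A).card := (Finset.card_biUnion hdisj).symm
    _ ≤ Fintype.card (Fin n → Bool) := Finset.card_le_univ _
    _ = 2 ^ n := by simp

/-- Abstract analytic part of Hansel's lemma. -/
lemma hansel_real {α : Type*} (n : ℕ) (s : Finset α) (d : α → ℕ)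
    (hsum : ∑ y ∈ s, 2 ^ (n - d y) ≤ 2 ^ n) (hd : ∀ y ∈ s, d y ≤ n) (hs : 0 < s.card) :
    Real.logb 2 (s.card : ℝ) ≤ (∑ y ∈ s, (d y : ℝ)) / (s.card : ℝ) := by
  have h2 : (0:ℝ) < 2 := two_pos
  set m : ℝ := (s.card : ℝ) with hm
  have hm0 : 0 < m := by rw [hm]; exact_mod_cast hs
  have base : ∀ t : ℕ, ((2:ℝ))⁻¹ ^ t = (2:ℝ) ^ (-(t:ℝ)) := by
    intro t
    rw [inv_pow, Real.rpow_neg h2.le, Real.rpow_natCast]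
  -- Step 1: ∑ (1/2)^(d y) ≤ 1
  have h1 : ∑ y ∈ s, ((2:ℝ))⁻¹ ^ (d y) ≤ 1 := by
    have hc : ∑ y ∈ s, (2:ℝ) ^ (n - d y) ≤ 2 ^ n := by exact_mod_cast hsum
    have heq : ∀ y ∈ s, (2:ℝ) ^ (n - d y) = 2 ^ n * ((2:ℝ))⁻¹ ^ (d y) := by
      intro y hy
      rw [pow_sub₀ (2:ℝ) two_ne_zero (hd y hy), inv_pow]
    rw [Finset.sum_congr rfl heq, ← Finset.mul_sum] at hc
    have hp : (0:ℝ) < 2 ^ n := pow_pos h2 n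
    nlinarith
  -- Step 2: AM-GM
  set Dt : ℝ := ∑ y ∈ s, (d y : ℝ) with hDt
  have hgm := Real.geom_mean_le_arith_mean_weighted s (fun _ => m⁻¹)
      (fun y => ((2:ℝ))⁻¹ ^ (d y)) (fun _ _ => by positivity)
      (by rw [Finset.sum_const, nsmul_eq_mul, ← hm, mul_inv_cancel₀ (ne_of_gt hm0)])
      (fun y _ => by positivity)
  have hrhs : ∑ y ∈ s, m⁻¹ * (((2:ℝ))⁻¹ ^ (d y)) ≤ m⁻¹ := by
    rw [← Finset.mul_sum]
    calc m⁻¹ * ∑ y ∈ s, ((2:ℝ))⁻¹ ^ (d y) ≤ m⁻¹ * 1 :=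
          mul_le_mul_of_nonneg_left h1 (inv_nonneg.mpr hm0.le)
      _ = m⁻¹ := mul_one _
  have hlhs : ∏ y ∈ s, (((2:ℝ))⁻¹ ^ (d y)) ^ (m⁻¹) = (2:ℝ) ^ (-(Dt / m)) := by
    have hterm : ∀ y ∈ s, (((2:ℝ))⁻¹ ^ (d y)) ^ (m⁻¹) = (2:ℝ) ^ (-(d y : ℝ) * m⁻¹) := by
      intro y _
      rw [base, ← Real.rpow_mul h2.le]
    rw [Finset.prod_congr rfl hterm, ← Real.rpow_sum_of_pos h2]
    congr 1
    rw [← Finset.sum_mul, Finset.sum_neg_distrib, hDt, div_eq_mul_inv, neg_mul]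
  rw [hlhs] at hgm
  have hkey : (2:ℝ) ^ (-(Dt / m)) ≤ m⁻¹ := le_trans hgm hrhs
  rw [Real.rpow_neg h2.le] at hkey
  have hrp : (0:ℝ) < (2:ℝ) ^ (Dt / m) := Real.rpow_pos_of_pos h2 _
  have hm2 : m ≤ (2:ℝ) ^ (Dt / m) := (inv_le_inv₀ hrp hm0).mp hkey
  exact (Real.logb_le_iff_le_rpow one_lt_two hm0).mpr hm2

/-- Hansel-type bound for `k`-hash codes: for distinct `x_1,…,x_{k-2} ∈ C`,
`log₂(|C| - k + 2) ≤ ∑_i τ_i`, where `τ_i` is the fraction of non-isolated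
vertices of the graph `G_i` on `C ∖ {x_1,…,x_{k-2}}` joining pairs whose `i`-th
symbols, together with those of `x_1,…,x_{k-2}`, are pairwise distinct. -/
theorem stmt12 (k n : ℕ) (hk : 4 ≤ k) (C : Finset (Fin n → Fin k))
    (hhash : ∀ S : Finset (Fin n → Fin k), S ⊆ C → S.card = k →
      ∃ i : Fin n, Set.InjOn (fun y : Fin n → Fin k => y i) (S : Set (Fin n → Fin k)))
    (hbig : k - 2 < C.card)
    (x : Fin (k - 2) → (Fin n → Fin k)) (hxC : ∀ s, x s ∈ C)
    (hxinj : Function.Injective x) :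
    Real.logb 2 ((C.card : ℝ) - (k : ℝ) + 2)
      ≤ ∑ i : Fin n,
          (Set.ncard {y : Fin n → Fin k | y ∈ C ∧ (∀ s, y ≠ x s) ∧
              ∃ y', y' ∈ C ∧ (∀ s, y' ≠ x s) ∧ y i ≠ y' i ∧
                (∀ s, y i ≠ x s i) ∧ (∀ s, y' i ≠ x s i) ∧
                (∀ s s', s ≠ s' → x s i ≠ x s' i)} : ℝ)
            / ((C.card : ℝ) - ((k : ℝ) - 2)) := by
  classical
  -- the removed codewords
  set X : Finset (Fin n → Fin k) := Finset.image x Finset.univ with hX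
  have hXcard : X.card = k - 2 := by
    rw [hX, Finset.card_image_of_injective _ hxinj, Finset.card_univ, Fintype.card_fin]
  have hXsub : X ⊆ C := by
    intro y hy
    rw [hX, Finset.mem_image] at hy
    obtain ⟨s, _, rfl⟩ := hy
    exact hxC s
  have hmemX : ∀ y, y ∈ X ↔ ∃ s, y = x s := by
    intro y
    rw [hX, Finset.mem_image]
    constructor
    · rintro ⟨s, _, rfl⟩; exact ⟨s, rfl⟩
    · rintro ⟨s, rfl⟩; exact ⟨s, Finset.mem_univ s, rfl⟩
  set C' : Finset (Fin n → Fin k) := C \ X with hC'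
  have hmemC' : ∀ y, y ∈ C' ↔ (y ∈ C ∧ ∀ s, y ≠ x s) := by
    intro y
    rw [hC', Finset.mem_sdiff, hmemX]
    constructor
    · rintro ⟨h1, h2⟩; exact ⟨h1, fun s hs => h2 ⟨s, hs⟩⟩
    · rintro ⟨h1, h2⟩; exact ⟨h1, fun ⟨s, hs⟩ => h2 s hs⟩
  have hC'card : C'.card = C.card - (k - 2) := by
    rw [hC', Finset.card_sdiff_of_subset hXsub, hXcard]
  have hC'pos : 0 < C'.card := by omega
  -- the vertex sets of non-isolated vertices
  set V : Fin n → Finset (Fin n → Fin k) := fun i =>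
    C'.filter (fun y => ∃ y', y' ∈ C ∧ (∀ s, y' ≠ x s) ∧ y i ≠ y' i ∧
      (∀ s, y i ≠ x s i) ∧ (∀ s, y' i ≠ x s i) ∧
      (∀ s s', s ≠ s' → x s i ≠ x s' i)) with hV
  have hVeq : ∀ i : Fin n,
      {y : Fin n → Fin k | y ∈ C ∧ (∀ s, y ≠ x s) ∧
        ∃ y', y' ∈ C ∧ (∀ s, y' ≠ x s) ∧ y i ≠ y' i ∧
          (∀ s, y i ≠ x s i) ∧ (∀ s, y' i ≠ x s i) ∧
          (∀ s s', s ≠ s' → x s i ≠ x s' i)} = (↑(V i) : Set (Fin n → Fin k)) := by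
    intro i
    ext y
    simp only [Set.mem_setOf_eq, hV, Finset.coe_filter, hmemC' y]
    constructor
    · rintro ⟨h1, h2, h3⟩; exact ⟨⟨h1, h2⟩, h3⟩
    · rintro ⟨⟨h1, h2⟩, h3⟩; exact ⟨h1, h2, h3⟩
  -- the side function
  set b : (Fin n → Fin k) → Fin n → Bool :=
    fun y i => decide (∃ v : Fin k, (∀ s, v ≠ x s i) ∧ v < y i) with hb
  set Dy : (Fin n → Fin k) → Finset (Fin n) :=
    fun y => Finset.univ.filter (fun i => y ∈ V i) with hDy
  -- key fact on values: given a full distinct coordinate, lower value has b = false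
  have hkeyval : ∀ (i : Fin n) (a c : Fin k), (∀ s, a ≠ x s i) → (∀ s, c ≠ x s i) →
      (∀ s s', s ≠ s' → x s i ≠ x s' i) → a < c →
      ¬ (∃ v : Fin k, (∀ s, v ≠ x s i) ∧ v < a) ∧ (∃ v : Fin k, (∀ s, v ≠ x s i) ∧ v < c) := by
    intro i a c ha hc hxx hac
    constructor
    · rintro ⟨v, hv, hva⟩
      -- then v, a, c and the k-2 values x s i are k+1 distinct values in Fin k
      have hxinj' : Function.Injective (fun s => x s i) := by
        intro s s' h
        by_contra hne
        exact hxx s s' hne h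
      set F : Finset (Fin k) :=
        insert v (insert a (insert c (Finset.image (fun s => x s i) Finset.univ))) with hF
      have himcard : (Finset.image (fun s => x s i) Finset.univ).card = k - 2 := by
        rw [Finset.card_image_of_injective _ hxinj', Finset.card_univ, Fintype.card_fin]
      have hcnot : c ∉ Finset.image (fun s => x s i) Finset.univ := by
        rw [Finset.mem_image]
        rintro ⟨s, _, hs⟩
        exact hc s hs.symm
      have hanot : a ∉ insert c (Finset.image (fun s => x s i) Finset.univ) := by
        rw [Finset.mem_insert]
        rintro (rfl | hmem)
        · exact absurd rfl (ne_of_lt hac)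
        · rw [Finset.mem_image] at hmem
          obtain ⟨s, _, hs⟩ := hmem
          exact ha s hs.symm
      have hvnot : v ∉ insert a (insert c (Finset.image (fun s => x s i) Finset.univ)) := by
        rw [Finset.mem_insert, Finset.mem_insert]
        rintro (rfl | rfl | hmem)
        · exact absurd rfl (ne_of_lt hva)
        · exact absurd rfl (ne_of_lt (lt_trans hva hac))
        · rw [Finset.mem_image] at hmem
          obtain ⟨s, _, hs⟩ := hmem
          exact hv s hs.symm
      have hFcard : F.card = k + 1 := by
        rw [hF, Finset.card_insert_of_notMem hvnot, Finset.card_insert_of_notMem hanot,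
          Finset.card_insert_of_notMem hcnot, himcard]
        omega
      have := Finset.card_le_univ F
      rw [hFcard, Fintype.card_fin] at this
      omega
    · exact ⟨a, ha, hac⟩
  -- separation property
  have hsep : ∀ y ∈ C', ∀ y' ∈ C', y ≠ y' →
      ∃ i, i ∈ Dy y ∧ i ∈ Dy y' ∧ b y i ≠ b y' i := by
    intro y hy y' hy' hne
    obtain ⟨hyC, hyx⟩ := (hmemC' y).mp hy
    obtain ⟨hy'C, hy'x⟩ := (hmemC' y').mp hy'
    have hynX : y ∉ X := by rw [hmemX]; rintro ⟨s, rfl⟩; exact hyx s rfl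
    have hy'nX : y' ∉ X := by rw [hmemX]; rintro ⟨s, rfl⟩; exact hy'x s rfl
    set S : Finset (Fin n → Fin k) := insert y (insert y' X) with hS
    have hSsub : S ⊆ C := by
      rw [hS]
      intro z hz
      rw [Finset.mem_insert, Finset.mem_insert] at hz
      rcases hz with rfl | rfl | hz
      · exact hyC
      · exact hy'C
      · exact hXsub hz
    have hScard : S.card = k := by
      rw [hS, Finset.card_insert_of_notMem, Finset.card_insert_of_notMem hy'nX, hXcard]
      · omega
      · rw [Finset.mem_insert]
        rintro (rfl | h)
        · exact hne rfl
        · exact hynX h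
    obtain ⟨i, hinj⟩ := hhash S hSsub hScard
    have hyS : y ∈ (S : Set (Fin n → Fin k)) := by
      rw [hS]; simp
    have hy'S : y' ∈ (S : Set (Fin n → Fin k)) := by
      rw [hS]; simp
    have hxS : ∀ s, x s ∈ (S : Set (Fin n → Fin k)) := by
      intro s
      rw [hS]
      simp only [Finset.coe_insert, Set.mem_insert_iff, Finset.mem_coe]
      right; right
      rw [hmemX]
      exact ⟨s, rfl⟩
    -- the pointwise distinctness facts
    have f1 : y i ≠ y' i := fun h => hne (hinj hyS hy'S h)
    have f2 : ∀ s, y i ≠ x s i := fun s h => hyx s (hinj hyS (hxS s) h)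
    have f3 : ∀ s, y' i ≠ x s i := fun s h => hy'x s (hinj hy'S (hxS s) h)
    have f4 : ∀ s s', s ≠ s' → x s i ≠ x s' i :=
      fun s s' hss h => hss (hxinj (hinj (hxS s) (hxS s') h))
    have hyV : y ∈ V i := by
      rw [hV, Finset.mem_filter]
      exact ⟨hy, y', hy'C, hy'x, f1, f2, f3, f4⟩
    have hy'V : y' ∈ V i := by
      rw [hV, Finset.mem_filter]
      exact ⟨hy', y, hyC, hyx, fun h => f1 h.symm, f3, f2, f4⟩
    refine ⟨i, by simp [hDy, hyV], by simp [hDy, hy'V], ?_⟩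
    rcases lt_trichotomy (y i) (y' i) with hlt | heq | hgt
    · obtain ⟨hno, hyes⟩ := hkeyval i (y i) (y' i) f2 f3 f4 hlt
      have e1 : b y i = false := by simp only [hb]; exact decide_eq_false hno
      have e2 : b y' i = true := by simp only [hb]; exact decide_eq_true hyes
      rw [e1, e2]; simp
    · exact absurd heq f1
    · obtain ⟨hno, hyes⟩ := hkeyval i (y' i) (y i) f3 f2 f4 hgt
      have e1 : b y' i = false := by simp only [hb]; exact decide_eq_false hno
      have e2 : b y i = true := by simp only [hb]; exact decide_eq_true hyes
      rw [e1, e2]; simp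
  -- apply the abstract lemmas
  have hcount := hansel_count C' Dy b hsep
  have hdle : ∀ y ∈ C', (Dy y).card ≤ n := by
    intro y _
    rw [hDy]
    calc (Finset.univ.filter (fun i => y ∈ V i)).card ≤ (Finset.univ : Finset (Fin n)).card :=
          Finset.card_filter_le _ _
      _ = n := by rw [Finset.card_univ, Fintype.card_fin]
  have hmain := hansel_real n C' (fun y => (Dy y).card) hcount hdle hC'pos
  -- double counting
  have hdouble : ∑ y ∈ C', ((Dy y).card : ℝ) = ∑ i : Fin n, ((V i).card : ℝ) := by
    have : ∑ y ∈ C', (Dy y).card = ∑ i : Fin n, (V i).card := by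
      have h1 : ∀ y, (Dy y).card = ∑ i : Fin n, if y ∈ V i then 1 else 0 := by
        intro y
        rw [hDy, Finset.card_filter]
      rw [Finset.sum_congr rfl (fun y _ => h1 y), Finset.sum_comm]
      refine Finset.sum_congr rfl (fun i _ => ?_)
      rw [← Finset.card_filter]
      congr 1
      ext y
      rw [Finset.mem_filter]
      constructor
      · exact fun h => h.2
      · intro h
        refine ⟨?_, h⟩
        rw [hV] at h
        exact Finset.mem_filter.mp h |>.1
    exact_mod_cast this
  -- cardinality identifications
  have hcast : (C'.card : ℝ) = (C.card : ℝ) - (k : ℝ) + 2 := by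
    have h1 : (C'.card : ℝ) = (C.card : ℝ) - ((k - 2 : ℕ) : ℝ) := by
      rw [hC'card]
      have : k - 2 ≤ C.card := by omega
      push_cast [Nat.cast_sub this]
      ring
    rw [h1]
    have : ((k - 2 : ℕ) : ℝ) = (k : ℝ) - 2 := by
      have h2 : 2 ≤ k := by omega
      push_cast [Nat.cast_sub h2]
      ring
    rw [this]
    ring
  have hncard : ∀ i : Fin n,
      (Set.ncard {y : Fin n → Fin k | y ∈ C ∧ (∀ s, y ≠ x s) ∧
        ∃ y', y' ∈ C ∧ (∀ s, y' ≠ x s) ∧ y i ≠ y' i ∧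
          (∀ s, y i ≠ x s i) ∧ (∀ s, y' i ≠ x s i) ∧
          (∀ s s', s ≠ s' → x s i ≠ x s' i)} : ℝ) = ((V i).card : ℝ) := by
    intro i
    rw [hVeq i, Set.ncard_coe_finset]
  calc Real.logb 2 ((C.card : ℝ) - (k : ℝ) + 2) = Real.logb 2 (C'.card : ℝ) := by rw [hcast]
    _ ≤ (∑ y ∈ C', ((Dy y).card : ℝ)) / (C'.card : ℝ) := hmain
    _ = ∑ i : Fin n, ((V i).card : ℝ) / (C'.card : ℝ) := by
        rw [hdouble, Finset.sum_div]
    _ = _ := by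
        refine Finset.sum_congr rfl (fun i _ => ?_)
        rw [hncard i]
        congr 1
        rw [hcast]
        ring
end

section
/- For $k \ge 4$, let $u \in \mathbb{R}^k$ be the uniform probability vector, $u_a = 1/k$. Then for every probability vector $g \in \mathbb{R}^k$, $\phi_k(g, u) \le \phi_k(u, u) = k!/k^{k-1}$, where $\phi_k(g,f) = \sum (\prod_{s=1}^{k-2} g_{a_s})(1 - \sum_{s=1}^{k-2} f_{a_s})$ summed over tuples of $k-2$ distinct indices in $[k]$. Hence $\theta_k(1/k) = k!/k^{k-1}$. -/
open Finset

noncomputable def Ssum (m k : ℕ) (g : Fin k → ℝ) : ℝ :=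
  ∑ σ : Fin m ↪ Fin k, ∏ s, g (σ s)

lemma Ssum_comp_perm (m k : ℕ) (π : Equiv.Perm (Fin k)) (g : Fin k → ℝ) :
    Ssum m k (g ∘ π) = Ssum m k g := by
  refine Fintype.sum_equiv (Equiv.embeddingCongr (Equiv.refl (Fin m)) π) _ _ (fun σ => ?_)
  simp [Equiv.embeddingCongr, Function.Embedding.congr]

lemma prod_update₂ {k : ℕ} (g : Fin k → ℝ) {a b : Fin k} (hab : a ≠ b) (x y : ℝ)
    (T : Finset (Fin k)) :
    ∏ c ∈ T, (Function.update (Function.update g a x) b y) c =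
      (if a ∈ T then x else 1) * ((if b ∈ T then y else 1) *
        ∏ c ∈ (T.erase a).erase b, g c) := by
  by_cases hb : b ∈ T
  · rw [Finset.prod_update_of_mem hb, Finset.sdiff_singleton_eq_erase]
    by_cases ha : a ∈ T
    · have ha' : a ∈ T.erase b := Finset.mem_erase.2 ⟨hab, ha⟩
      rw [Finset.prod_update_of_mem ha', Finset.sdiff_singleton_eq_erase,
        Finset.erase_right_comm]
      simp only [ha, hb, if_true]; ring
    · rw [Finset.prod_update_of_notMem (fun h => ha (Finset.mem_of_mem_erase h)),
        Finset.erase_eq_of_notMem ha]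
      simp only [ha, hb, if_true, if_false]; ring
  · rw [Finset.prod_update_of_notMem hb]
    by_cases ha : a ∈ T
    · rw [Finset.prod_update_of_mem ha, Finset.sdiff_singleton_eq_erase,
        Finset.erase_eq_of_notMem (fun h => hb (Finset.mem_of_mem_erase h))]
      simp only [ha, hb, if_true, if_false]; ring
    · rw [Finset.prod_update_of_notMem ha, Finset.erase_eq_of_notMem ha,
        Finset.erase_eq_of_notMem hb]
      simp only [ha, hb, if_false]; ring

lemma Ssum_repr {m k : ℕ} (g : Fin k → ℝ) (hg : ∀ c, 0 ≤ g c) {a b : Fin k} (hab : a ≠ b) :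
    ∃ A B₁ B₂ C : ℝ, 0 ≤ C ∧ ∀ x y : ℝ,
      Ssum m k (Function.update (Function.update g a x) b y)
        = A + B₁ * x + B₂ * y + C * (x * y) := by
  classical
  set Q : (Fin m ↪ Fin k) → ℝ := fun σ => ∏ c ∈ ((univ.map σ).erase a).erase b, g c with hQ
  refine ⟨∑ σ ∈ univ.filter (fun σ : Fin m ↪ Fin k => ¬ a ∈ univ.map σ ∧ ¬ b ∈ univ.map σ), Q σ,
          ∑ σ ∈ univ.filter (fun σ : Fin m ↪ Fin k => a ∈ univ.map σ ∧ ¬ b ∈ univ.map σ), Q σ,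
          ∑ σ ∈ univ.filter (fun σ : Fin m ↪ Fin k => ¬ a ∈ univ.map σ ∧ b ∈ univ.map σ), Q σ,
          ∑ σ ∈ univ.filter (fun σ : Fin m ↪ Fin k => a ∈ univ.map σ ∧ b ∈ univ.map σ), Q σ,
          Finset.sum_nonneg fun σ _ => Finset.prod_nonneg fun c _ => hg c, fun x y => ?_⟩
  calc Ssum m k (Function.update (Function.update g a x) b y)
      = ∑ σ : Fin m ↪ Fin k,
          (if a ∈ univ.map σ then x else 1) * ((if b ∈ univ.map σ then y else 1) * Q σ) := by
        refine Finset.sum_congr rfl fun σ _ => ?_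
        rw [show (∏ s, (Function.update (Function.update g a x) b y) (σ s))
            = ∏ c ∈ univ.map σ, (Function.update (Function.update g a x) b y) c from
          (Finset.prod_map univ σ _).symm]
        exact prod_update₂ g hab x y _
    _ = ∑ σ : Fin m ↪ Fin k,
          ((if ¬ a ∈ univ.map σ ∧ ¬ b ∈ univ.map σ then Q σ else 0)
           + ((if a ∈ univ.map σ ∧ ¬ b ∈ univ.map σ then Q σ else 0) * x
           + ((if ¬ a ∈ univ.map σ ∧ b ∈ univ.map σ then Q σ else 0) * y
           + (if a ∈ univ.map σ ∧ b ∈ univ.map σ then Q σ else 0) * (x * y)))) := by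
        refine Finset.sum_congr rfl fun σ _ => ?_
        by_cases ha : a ∈ univ.map σ <;> by_cases hb : b ∈ univ.map σ <;>
          simp [ha, hb] <;> ring
    _ = _ := by
        simp only [Finset.sum_add_distrib, ← Finset.sum_mul, Finset.sum_filter]
        ring

lemma Ssum_exchange {m k : ℕ} (g : Fin k → ℝ) (hg : ∀ c, 0 ≤ g c) {a b : Fin k} (hab : a ≠ b)
    {x y x' y' : ℝ} (hs : x + y = x' + y') (hp : x * y ≤ x' * y') :
    Ssum m k (Function.update (Function.update g a x) b y) ≤
      Ssum m k (Function.update (Function.update g a x') b y') := by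
  obtain ⟨A, B₁, B₂, C, hC, hrepr⟩ := Ssum_repr g hg hab
  have hsymm : ∀ x y : ℝ, Ssum m k (Function.update (Function.update g a x) b y)
      = Ssum m k (Function.update (Function.update g a y) b x) := by
    intro x y
    have hfun : Function.update (Function.update g a x) b y =
        (Function.update (Function.update g a y) b x) ∘ (Equiv.swap a b) := by
      funext c
      rcases eq_or_ne c a with rfl | hca
      · simp [Function.update_apply, hab, hab.symm]
      · rcases eq_or_ne c b with rfl | hcb
        · simp [Function.update_apply, hab, hab.symm]
        · simp [Function.update_apply, hca, hcb, Equiv.swap_apply_of_ne_of_ne hca hcb]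
    rw [hfun, Ssum_comp_perm]
  have hB : B₁ = B₂ := by
    have h3 := hsymm 1 0
    rw [hrepr 1 0, hrepr 0 1] at h3
    linarith [h3]
  have hy' : y' = x + y - x' := by linarith
  subst hy'
  rw [hrepr, hrepr, ← hB]
  nlinarith [mul_le_mul_of_nonneg_left hp hC]

lemma Ssum_le_uniform {k : ℕ} (hk : 0 < k) (m : ℕ) :
    ∀ n : ℕ, ∀ g : Fin k → ℝ, (∀ a, 0 ≤ g a) → ∑ a, g a = 1 →
      (univ.filter fun a => g a ≠ 1 / (k:ℝ)).card ≤ n →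
      Ssum m k g ≤ Ssum m k (fun _ => 1 / (k:ℝ)) := by
  have hk0 : (0:ℝ) < (k:ℝ) := by exact_mod_cast hk
  have hik : (0:ℝ) < 1/(k:ℝ) := by positivity
  intro n
  induction n with
  | zero =>
    intro g hg hsum hcard
    have hall : ∀ a, g a = 1/(k:ℝ) := by
      intro a
      by_contra h
      have hmem : a ∈ univ.filter fun a => g a ≠ 1/(k:ℝ) := by
        simp only [mem_filter, mem_univ, true_and]; exact h
      have := Finset.card_pos.2 ⟨a, hmem⟩
      omega
    rw [show g = fun _ => 1/(k:ℝ) from funext hall]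
  | succ n ih =>
    intro g hg hsum hcard
    by_cases huni : ∀ a, g a = 1/(k:ℝ)
    · rw [show g = fun _ => 1/(k:ℝ) from funext huni]
    · push_neg at huni
      obtain ⟨c, hc⟩ := huni
      have hA : ∃ a, g a < 1/(k:ℝ) := by
        by_contra h; push_neg at h
        have hz : ∑ a : Fin k, (g a - 1/(k:ℝ)) = 0 := by
          rw [Finset.sum_sub_distrib, hsum, Finset.sum_const, Finset.card_univ,
            Fintype.card_fin, nsmul_eq_mul]
          field_simp
          ring
        have h0 := (Finset.sum_eq_zero_iff_of_nonneg
          (fun a _ => sub_nonneg.2 (h a))).1 hz c (mem_univ c)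
        exact hc (by linarith)
      obtain ⟨a, halt⟩ := hA
      have hB : ∃ b, 1/(k:ℝ) < g b := by
        by_contra h; push_neg at h
        have hz : ∑ x : Fin k, (1/(k:ℝ) - g x) = 0 := by
          rw [Finset.sum_sub_distrib, hsum, Finset.sum_const, Finset.card_univ,
            Fintype.card_fin, nsmul_eq_mul]
          field_simp
          ring
        have h0 := (Finset.sum_eq_zero_iff_of_nonneg
          (fun x _ => sub_nonneg.2 (h x))).1 hz a (mem_univ a)
        linarith
      obtain ⟨b, hblt⟩ := hB
      have hab : a ≠ b := by rintro rfl; linarith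
      have key : Ssum m k g ≤ Ssum m k (Function.update (Function.update g a (1/(k:ℝ)))
          b (g a + g b - 1/(k:ℝ))) := by
        have hgg : g = Function.update (Function.update g a (g a)) b (g b) := by
          simp [Function.update_eq_self]
        conv_lhs => rw [hgg]
        refine Ssum_exchange g hg hab (by ring) ?_
        nlinarith [mul_nonneg (by linarith : (0:ℝ) ≤ 1/(k:ℝ) - g a)
          (by linarith : (0:ℝ) ≤ g b - 1/(k:ℝ))]
      set g' : Fin k → ℝ := Function.update (Function.update g a (1/(k:ℝ)))
          b (g a + g b - 1/(k:ℝ)) with hg'def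
      have hg'nonneg : ∀ c, 0 ≤ g' c := by
        intro d
        rcases eq_or_ne d b with rfl | hdb
        · simp only [hg'def, Function.update_self]
          linarith [hg a, hik]
        · rcases eq_or_ne d a with rfl | hda
          · have heq : g' d = 1/(k:ℝ) := by
              simp [hg'def, Function.update_apply, hdb]
            rw [heq]; positivity
          · have heq : g' d = g d := by
              simp [hg'def, Function.update_apply, hdb, hda]
            rw [heq]; exact hg d
      have hg'sum : ∑ c, g' c = 1 := by
        have h1 : ∑ c, g' c = (g a + g b - 1/(k:ℝ))
            + ∑ c ∈ univ \ {b}, Function.update g a (1/(k:ℝ)) c :=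
          Finset.sum_update_of_mem (mem_univ b) _ _
        have h2 : ∑ c ∈ univ \ {b}, Function.update g a (1/(k:ℝ)) c
            = 1/(k:ℝ) + ∑ c ∈ (univ \ {b}) \ {a}, g c :=
          Finset.sum_update_of_mem
            (by rw [Finset.sdiff_singleton_eq_erase]
                exact Finset.mem_erase.2 ⟨hab, mem_univ a⟩) _ _
        rw [Finset.sdiff_singleton_eq_erase] at h1 h2
        rw [Finset.sdiff_singleton_eq_erase] at h2
        have h3 : g b + ∑ c ∈ univ.erase b, g c = ∑ c : Fin k, g c :=
          Finset.add_sum_erase univ g (mem_univ b)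
        have h4 : g a + ∑ c ∈ (univ.erase b).erase a, g c = ∑ c ∈ univ.erase b, g c :=
          Finset.add_sum_erase _ g (Finset.mem_erase.2 ⟨hab, mem_univ a⟩)
        rw [hsum] at h3
        rw [h1, h2]
        linarith
      have hg'card : (univ.filter fun c => g' c ≠ 1/(k:ℝ)).card ≤ n := by
        have hsub : (univ.filter fun c => g' c ≠ 1/(k:ℝ)) ⊆
            (univ.filter fun c => g c ≠ 1/(k:ℝ)).erase a := by
          intro d hd
          simp only [mem_filter, mem_univ, true_and] at hd
          have hda : d ≠ a := by
            rintro rfl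
            apply hd
            simp [hg'def, Function.update_apply, hab]
          refine Finset.mem_erase.2 ⟨hda, Finset.mem_filter.2 ⟨mem_univ d, ?_⟩⟩
          rcases eq_or_ne d b with rfl | hdb
          · exact ne_of_gt hblt
          · have heq : g' d = g d := by
              simp [hg'def, Function.update_apply, hda, hdb]
            rwa [heq] at hd
        have hamem : a ∈ univ.filter fun c => g c ≠ 1/(k:ℝ) := by
          simp only [mem_filter, mem_univ, true_and]
          exact ne_of_lt halt
        have hle := Finset.card_le_card hsub
        have hcpos := Finset.card_pos.2 ⟨a, hamem⟩
        rw [Finset.card_erase_of_mem hamem] at hle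
        omega
      exact key.trans (ih g' hg'nonneg hg'sum hg'card)

/-- With `u` the uniform probability vector on `[k]`: for every probability vector
`g`, `φ_k(g,u) ≤ φ_k(u,u) = k!/k^{k-1}`; hence `θ_k(1/k) = k!/k^{k-1}`. -/
theorem stmt15 (k : ℕ) (hk : 4 ≤ k)
    (φ : (Fin k → ℝ) → (Fin k → ℝ) → ℝ)
    (hφ : φ = fun g f => ∑ σ : Fin (k - 2) ↪ Fin k,
      (∏ s, g (σ s)) * (1 - ∑ s, f (σ s)))
    (u : Fin k → ℝ) (hu : u = fun _ => 1 / (k : ℝ)) :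
    (∀ g : Fin k → ℝ, (∀ a, 0 ≤ g a) → (∑ a, g a = 1) →
        φ g u ≤ (Nat.factorial k : ℝ) / (k : ℝ) ^ (k - 1)) ∧
    φ u u = (Nat.factorial k : ℝ) / (k : ℝ) ^ (k - 1) ∧
    sSup ((fun p : (Fin k → ℝ) × (Fin k → ℝ) => φ p.1 p.2) ''
        {p : (Fin k → ℝ) × (Fin k → ℝ) |
          (∀ a, 0 ≤ p.1 a) ∧ (∑ a, p.1 a = 1) ∧
          (∀ a, 0 ≤ p.2 a) ∧ (∑ a, p.2 a = 1) ∧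
          (∀ a, 1 / (k : ℝ) ≤ p.2 a)})
      = (Nat.factorial k : ℝ) / (k : ℝ) ^ (k - 1) := by
  have hkpos : 0 < k := by omega
  have hk0 : (0:ℝ) < (k:ℝ) := by exact_mod_cast hkpos
  have hkne : (k:ℝ) ≠ 0 := ne_of_gt hk0
  have hcardm : ((k-2 : ℕ) : ℝ) = (k:ℝ) - 2 := by
    have h2 : (2:ℕ) ≤ k := by omega
    push_cast [Nat.cast_sub h2]
    ring
  -- φ g u = (2/k) * Ssum (k-2) k g
  have hphi : ∀ g : Fin k → ℝ, φ g u = (2/(k:ℝ)) * Ssum (k-2) k g := by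
    intro g
    simp only [hφ, hu, Ssum, Finset.mul_sum]
    refine Finset.sum_congr rfl fun σ _ => ?_
    rw [Finset.sum_const, Finset.card_univ, Fintype.card_fin, nsmul_eq_mul, hcardm]
    have h22 : (1:ℝ) - ((k:ℝ)-2) * (1/(k:ℝ)) = 2/(k:ℝ) := by
      field_simp
      ring
    rw [h22]; ring
  -- Ssum at uniform
  have hSu : Ssum (k-2) k (fun _ => 1/(k:ℝ))
      = (k.descFactorial (k-2) : ℝ) * (1/(k:ℝ))^(k-2) := by
    simp [Ssum, Finset.prod_const, Finset.card_univ, Fintype.card_embedding_eq,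
      Fintype.card_fin]
  have hdesc : 2 * (k.descFactorial (k-2)) = k.factorial := by
    have h := Nat.factorial_mul_descFactorial (show k-2 ≤ k by omega)
    rw [show k - (k-2) = 2 by omega] at h
    norm_num [Nat.factorial] at h
    exact h
  have hM : (2/(k:ℝ)) * ((k.descFactorial (k-2) : ℝ) * (1/(k:ℝ))^(k-2))
      = (Nat.factorial k : ℝ) / (k:ℝ)^(k-1) := by
    have h2 : ((Nat.factorial k : ℕ):ℝ) = 2 * (k.descFactorial (k-2) : ℝ) := by
      exact_mod_cast hdesc.symm
    rw [show k - 1 = (k-2)+1 by omega, pow_succ, h2]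
    field_simp
    ring
    rw [← mul_pow, mul_inv_cancel₀ hkne, one_pow]
  have huu : φ u u = (Nat.factorial k : ℝ) / (k:ℝ)^(k-1) := by
    rw [hphi, hu, hSu, hM]
  have hmain : ∀ g : Fin k → ℝ, (∀ a, 0 ≤ g a) → (∑ a, g a = 1) →
      φ g u ≤ (Nat.factorial k : ℝ) / (k:ℝ)^(k-1) := by
    intro g hg hgs
    rw [hphi, ← hM]
    have hle := Ssum_le_uniform hkpos (k-2)
      ((univ.filter fun a => g a ≠ 1/(k:ℝ)).card) g hg hgs le_rfl
    rw [hSu] at hle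
    have h2k : (0:ℝ) ≤ 2/(k:ℝ) := by positivity
    exact mul_le_mul_of_nonneg_left hle h2k
  refine ⟨hmain, huu, ?_⟩
  have hu_nonneg : ∀ a, 0 ≤ u a := by intro a; rw [hu]; positivity
  have hu_sum : ∑ a, u a = 1 := by
    rw [hu, Finset.sum_const, Finset.card_univ, Fintype.card_fin, nsmul_eq_mul]
    field_simp
  refine IsGreatest.csSup_eq ⟨⟨(u, u), ⟨hu_nonneg, hu_sum, hu_nonneg, hu_sum,
    fun a => by rw [hu]⟩, huu⟩, ?_⟩
  rintro x ⟨p, ⟨h1, h2, h3, h4, h5⟩, rfl⟩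
  have hp2 : p.2 = u := by
    have hz : ∑ a : Fin k, (p.2 a - 1/(k:ℝ)) = 0 := by
      rw [Finset.sum_sub_distrib, h4, Finset.sum_const, Finset.card_univ,
        Fintype.card_fin, nsmul_eq_mul]
      field_simp
      ring
    have h0 := (Finset.sum_eq_zero_iff_of_nonneg
      (fun a _ => sub_nonneg.2 (h5 a))).1 hz
    funext a
    have := h0 a (mem_univ a)
    rw [hu]
    simp only
    linarith
  show φ p.1 p.2 ≤ _
  rw [hp2]
  exact hmain p.1 h1 h2
end
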